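/- For all natural numbers m, n, k with n ≤ m + k, one has C(m + k - n, n, k) = Σ_{i=0}^{m} binom(n, m - i) · binom(k + i, k). -/

import Mathlib

open Finset

/-- The set of ternary words of length `m + n` (as functions `Fin (m+n) → Fin 3`)
having exactly `k` letters equal to `2` and no letter equal to `0` among the
first `m` letters. -/
def ternaryWords (m n k : ℕ) : Finset (Fin (m + n) → Fin 3) :=
  univ.filter fun w =>
    (univ.filter fun i => w i = 2).card = k ∧ ∀ i : Fin (m + n), (i : ℕ) < m → w i ≠ 0

/-- `C m n k` is the number of ternary words of length `m + n` with exactly `k`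
twos and no zero among the first `m` letters; it equals the inset number
`{m,n choose k}` of Janjić–Petković. -/
def C (m n k : ℕ) : ℕ := (ternaryWords m n k).card

lemma fin3_cases (x : Fin 3) : x = 0 ∨ x = 1 ∨ x = 2 := by
  omega

lemma upper_card (m n : ℕ) :
    (univ.filter fun i : Fin (m + n) => m ≤ (i : ℕ)).card = n := by
  have : (univ.filter fun i : Fin (m + n) => m ≤ (i : ℕ)) =
      (univ : Finset (Fin n)).map (Fin.natAddEmb m) := by
    ext i
    simp only [mem_filter, mem_univ, true_and, mem_map, Fin.natAddEmb,
      Function.Embedding.coeFn_mk, Fin.natAdd]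
    constructor
    · intro hi
      refine ⟨⟨(i : ℕ) - m, by omega⟩, ?_⟩
      ext
      show m + ((i : ℕ) - m) = (i : ℕ)
      omega
    · rintro ⟨j, rfl⟩
      show m ≤ m + (j : ℕ)
      omega
  rw [this, card_map, card_univ, Fintype.card_fin]

/-- Closed-form count for `C`. -/
lemma C_eq_sum (m n k : ℕ) :
    C m n k = ∑ i ∈ range (n + 1), n.choose i * (m + n - i).choose k := by
  classical
  have hScard : (univ.filter fun i : Fin (m + n) => m ≤ (i : ℕ)).card = n := upper_card m n
  have hcard : C m n k =
      ((univ.filter fun i : Fin (m + n) => m ≤ (i : ℕ)).powerset.sigma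
        fun Z => Zᶜ.powersetCard k).card := by
    unfold C ternaryWords
    refine card_bij' (fun w _ => ⟨univ.filter fun i => w i = 0,
        univ.filter fun i => w i = 2⟩)
      (fun p _ => fun i => if i ∈ p.1 then 0 else if i ∈ p.2 then 2 else 1)
      ?_ ?_ ?_ ?_
    · -- maps into the sigma set
      intro w hw
      simp only [mem_filter, mem_univ, true_and] at hw
      simp only [mem_sigma, mem_powerset, mem_powersetCard]
      refine ⟨?_, ?_, hw.1⟩
      · intro i hi
        simp only [mem_filter, mem_univ, true_and] at hi ⊢
        by_contra hlt
        exact hw.2 i (by omega) hi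
      · intro i hi
        simp only [mem_filter, mem_univ, true_and, mem_compl] at hi ⊢
        rw [hi]
        decide
    · -- maps back into words
      intro p hp
      simp only [mem_sigma, mem_powerset, mem_powersetCard] at hp
      obtain ⟨hZ, hT, hTk⟩ := hp
      simp only [mem_filter, mem_univ, true_and]
      constructor
      · rw [← hTk]
        congr 1
        ext i
        simp only [mem_filter, mem_univ, true_and]
        by_cases h1 : i ∈ p.1
        · have h2 : i ∉ p.2 := fun hh => (mem_compl.mp (hT hh)) h1
          rw [if_pos h1]
          exact iff_of_false (by decide) h2
        · rw [if_neg h1]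
          by_cases h2 : i ∈ p.2
          · rw [if_pos h2]; exact iff_of_true rfl h2
          · rw [if_neg h2]; exact iff_of_false (by decide) h2
      · intro i hi
        have hiZ : i ∉ p.1 := by
          intro hmem
          have := hZ hmem
          simp only [mem_filter, mem_univ, true_and] at this
          omega
        rw [if_neg hiZ]
        split_ifs <;> decide
    · -- left inverse
      intro w hw
      funext i
      rcases fin3_cases (w i) with h | h | h <;> simp [h]
    · -- right inverse
      intro p hp
      simp only [mem_sigma, mem_powerset, mem_powersetCard] at hp
      obtain ⟨hZ, hT, hTk⟩ := hp
      obtain ⟨Z, T⟩ := p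
      simp only at hZ hT hTk ⊢
      have e1 : (univ.filter fun i =>
          (if i ∈ Z then (0 : Fin 3) else if i ∈ T then 2 else 1) = 0) = Z := by
        ext i
        simp only [mem_filter, mem_univ, true_and]
        by_cases h1 : i ∈ Z
        · rw [if_pos h1]; exact iff_of_true rfl h1
        · rw [if_neg h1]
          by_cases h2 : i ∈ T
          · rw [if_pos h2]; exact iff_of_false (by decide) h1
          · rw [if_neg h2]; exact iff_of_false (by decide) h1
      have e2 : (univ.filter fun i =>
          (if i ∈ Z then (0 : Fin 3) else if i ∈ T then 2 else 1) = 2) = T := by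
        ext i
        simp only [mem_filter, mem_univ, true_and]
        by_cases h1 : i ∈ Z
        · have h2 : i ∉ T := fun hh => (mem_compl.mp (hT hh)) h1
          rw [if_pos h1]
          exact iff_of_false (by decide) h2
        · rw [if_neg h1]
          by_cases h2 : i ∈ T
          · rw [if_pos h2]; exact iff_of_true rfl h2
          · rw [if_neg h2]; exact iff_of_false (by decide) h2
      rw [e1, e2]
  rw [hcard, card_sigma]
  have step : ∀ Z ∈ (univ.filter fun i : Fin (m + n) => m ≤ (i : ℕ)).powerset,
      (Zᶜ.powersetCard k).card = (m + n - Z.card).choose k := by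
    intro Z _
    rw [card_powersetCard, card_compl, Fintype.card_fin]
  rw [sum_congr rfl step]
  rw [sum_powerset_apply_card (fun j => (m + n - j).choose k)]
  rw [hScard]
  simp [smul_eq_mul]

theorem stmt_14 (m n k : ℕ) (h : n ≤ m + k) :
    C (m + k - n) n k =
      ∑ i ∈ Finset.range (m + 1), n.choose (m - i) * (k + i).choose k := by
  rw [C_eq_sum]
  have hmk : m + k - n + n = m + k := by omega
  have hL : ∑ i ∈ range (n + 1), n.choose i * (m + k - n + n - i).choose k
      = ∑ i ∈ range (n + 1), n.choose i * (m + k - i).choose k := by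
    refine sum_congr rfl fun i _ => ?_
    rw [hmk]
  have hR : ∑ i ∈ range (m + 1), n.choose (m - i) * (k + i).choose k
      = ∑ j ∈ range (m + 1), n.choose j * (m + k - j).choose k := by
    rw [← sum_range_reflect]
    refine sum_congr rfl fun j hj => ?_
    simp only [mem_range] at hj
    congr 2 <;> omega
  rw [hL, hR]
  set g : ℕ → ℕ := fun j => n.choose j * (m + k - j).choose k with hg
  have key : ∀ a b : ℕ, (∀ j, a < j → j ≤ b → g j = 0) → a ≤ b →
      ∑ j ∈ range (a + 1), g j = ∑ j ∈ range (b + 1), g j := by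
    intro a b hz hab
    have hzero : ∑ j ∈ Finset.Ico (a + 1) (b + 1), g j = 0 := by
      apply Finset.sum_eq_zero
      intro j hj
      simp only [Finset.mem_Ico] at hj
      exact hz j (by omega) (by omega)
    rw [← Finset.sum_range_add_sum_Ico g (by omega : a + 1 ≤ b + 1), hzero, add_zero]
  have hzn : ∀ j, n < j → j ≤ m + n + k → g j = 0 := by
    intro j hj _
    simp [hg, Nat.choose_eq_zero_of_lt hj]
  have hzm : ∀ j, m < j → j ≤ m + n + k → g j = 0 := by
    intro j hj1 hj2
    by_cases hjn : n < j
    · exact hzn j hjn hj2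
    · have hj3 : j ≤ m + k := le_trans (not_lt.mp hjn) h
      have : m + k - j < k := by omega
      simp [hg, Nat.choose_eq_zero_of_lt this]
  rw [key n (m + n + k) hzn (by omega), key m (m + n + k) hzm (by omega)]
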